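/- arXiv:2312.11000 — 2 statements merged into one kernel-verified Lean document; each statement's English description precedes it below -/
import Mathlib

section
/- Let A be a real 3×3 invertible matrix such that A⁻¹ has all entries strictly positive and 0 < det A < 1. Then A has a real eigenvalue λ with 0 < λ < 1. Moreover λ can be taken to be the eigenvalue of smallest modulus of A (equivalently, the reciprocal of the Perron root of A⁻¹). -/
open Matrix Filter
open scoped ENNReal NNReal

attribute [local instance] Matrix.linftyOpNormedRing Matrix.linftyOpNormedAlgebra

noncomputable local instance : CompleteSpace (Matrix (Fin 3) (Fin 3) ℂ) :=
  FiniteDimensional.complete ℂ _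

lemma mem_spec_iff_det (M : Matrix (Fin 3) (Fin 3) ℂ) (μ : ℂ) :
    μ ∈ spectrum ℂ M ↔ Matrix.det (M - μ • 1) = 0 := by
  rw [spectrum.mem_iff, Algebra.algebraMap_eq_smul_one, Matrix.isUnit_iff_isUnit_det,
    isUnit_iff_ne_zero, not_not]
  constructor
  · intro h
    have : M - μ • 1 = -(μ • 1 - M) := by rw [neg_sub]
    rw [this, Matrix.det_neg, h, mul_zero]
  · intro h
    have : μ • (1:Matrix (Fin 3) (Fin 3) ℂ) - M = -(M - μ • 1) := by rw [neg_sub]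
    rw [this, Matrix.det_neg, h, mul_zero]

lemma perron3 (B : Matrix (Fin 3) (Fin 3) ℝ) (hB : ∀ i j, 0 < B i j) (hdet : B.det ≠ 0) :
    ∃ ρ : ℝ, 0 < ρ ∧ Matrix.det (B - ρ • 1) = 0 ∧
      ∀ μ : ℂ, Matrix.det (B.map Complex.ofReal - μ • 1) = 0 → ‖μ‖ ≤ ρ := by
  set M : Matrix (Fin 3) (Fin 3) ℂ := B.map Complex.ofReal with hM
  have hMpow : ∀ n : ℕ, M ^ n = (B ^ n).map Complex.ofReal := by
    intro n
    have : M = Complex.ofRealHom.mapMatrix B := rfl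
    rw [this, ← map_pow]; rfl
  have hdetM : M.det ≠ 0 := by
    have : M.det = Complex.ofReal B.det := (RingHom.map_det Complex.ofRealHom B).symm
    simp [this, hdet]
  obtain ⟨μ₀, hμ₀mem, hμ₀rad⟩ :=
    spectrum.exists_nnnorm_eq_spectralRadius_of_nonempty (𝕜 := ℂ) (spectrum.nonempty M)
  set ρ : ℝ := ‖μ₀‖ with hρ
  have hmax : ∀ μ : ℂ, Matrix.det (M - μ • 1) = 0 → ‖μ‖ ≤ ρ := by
    intro μ hμ
    have hmem : μ ∈ spectrum ℂ M := (mem_spec_iff_det M μ).mpr hμ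
    have h1 : (‖μ‖₊ : ℝ≥0∞) ≤ spectralRadius ℂ M := le_iSup₂ (f := fun k _ => (‖k‖₊ : ℝ≥0∞)) μ hmem
    rw [← hμ₀rad] at h1
    have : ‖μ‖ ≤ ‖μ₀‖ := by exact_mod_cast h1
    simpa using this
  have hρpos : 0 < ρ := by
    rcases eq_or_ne μ₀ 0 with h | h
    · exfalso
      apply hdetM
      have := (mem_spec_iff_det M 0).mp (h ▸ hμ₀mem)
      simpa using this
    · simpa [hρ] using norm_pos_iff.mpr h
  -- eigenvector
  have hdet0 : Matrix.det (M - μ₀ • 1) = 0 := (mem_spec_iff_det M μ₀).mp hμ₀mem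
  obtain ⟨v, hv0, hv⟩ := (Matrix.exists_mulVec_eq_zero_iff).mpr hdet0
  have hv' : M *ᵥ v = μ₀ • v := by
    rwa [Matrix.sub_mulVec, Matrix.smul_mulVec, Matrix.one_mulVec, sub_eq_zero] at hv
  set u : Fin 3 → ℝ := fun i => ‖v i‖ with hu
  have hu0 : ∀ i, 0 ≤ u i := fun i => norm_nonneg _
  obtain ⟨j₀, hj₀⟩ : ∃ j, 0 < u j := by
    obtain ⟨j, hj⟩ := Function.ne_iff.mp hv0
    exact ⟨j, norm_pos_iff.mpr hj⟩
  have key : ∀ i, ρ * u i ≤ (B *ᵥ u) i := by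
    intro i
    have h1 : (M *ᵥ v) i = μ₀ * v i := by rw [hv']; simp
    calc ρ * u i = ‖μ₀ * v i‖ := by rw [norm_mul]
      _ = ‖(M *ᵥ v) i‖ := by rw [h1]
      _ ≤ ∑ j, ‖M i j * v j‖ := by
          rw [Matrix.mulVec, dotProduct]
          exact norm_sum_le _ _
      _ = ∑ j, B i j * u j := by
          refine Finset.sum_congr rfl fun j _ => ?_
          rw [norm_mul]
          congr 1
          simp [hM, Matrix.map_apply, abs_of_pos (hB i j)]
      _ = (B *ᵥ u) i := by rw [Matrix.mulVec, dotProduct]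
  have heq : B *ᵥ u = ρ • u := by
    by_contra hne
    obtain ⟨i₀, hi₀⟩ : ∃ i, (B *ᵥ u) i ≠ ρ * u i := by
      by_contra hc
      push_neg at hc
      exact hne (funext fun i => by rw [hc i]; simp)
    have hstrict : ρ * u i₀ < (B *ᵥ u) i₀ := lt_of_le_of_ne (key i₀) (Ne.symm hi₀)
    set w := B *ᵥ u with hw
    have hwpos : ∀ i, 0 < w i := by
      intro i
      rw [hw]
      rw [Matrix.mulVec, dotProduct]
      exact Finset.sum_pos' (fun j _ => mul_nonneg (hB i j).le (hu0 j))
        ⟨j₀, Finset.mem_univ _, mul_pos (hB i j₀) hj₀⟩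
    have hsub : ∀ j, 0 ≤ w j - ρ * u j := fun j => sub_nonneg.mpr (key j)
    have hBw : ∀ i, ρ * w i < (B *ᵥ w) i := by
      intro i
      have h2 : ∑ j, B i j * (w j - ρ * u j) = (B *ᵥ w) i - ρ * (B *ᵥ u) i := by
        simp only [Matrix.mulVec, dotProduct, Finset.mul_sum, ← Finset.sum_sub_distrib]
        exact Finset.sum_congr rfl fun j _ => by ring
      have h3 : 0 < ∑ j, B i j * (w j - ρ * u j) :=
        Finset.sum_pos' (fun j _ => mul_nonneg (hB i j).le (hsub j))
          ⟨i₀, Finset.mem_univ _, mul_pos (hB i i₀) (by simpa [hw] using sub_pos.mpr hstrict)⟩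
      rw [h2] at h3
      linarith
    have hne3 : (Finset.univ : Finset (Fin 3)).Nonempty := ⟨0, Finset.mem_univ 0⟩
    set t := Finset.univ.inf' hne3 (fun i => (B *ᵥ w) i / w i) with htdef
    have htρ : ρ < t := by
      rw [htdef, Finset.lt_inf'_iff]
      intro i _
      rw [lt_div_iff₀ (hwpos i)]
      linarith [hBw i]
    have htw : ∀ i, t * w i ≤ (B *ᵥ w) i := by
      intro i
      have h4 : t ≤ (B *ᵥ w) i / w i := Finset.inf'_le _ (Finset.mem_univ i)
      exact (le_div_iff₀ (hwpos i)).mp h4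
    have ht0 : 0 < t := hρpos.trans htρ
    have hmono : ∀ x y : Fin 3 → ℝ, (∀ j, x j ≤ y j) → ∀ i, (B *ᵥ x) i ≤ (B *ᵥ y) i := by
      intro x y hxy i
      simp only [Matrix.mulVec, dotProduct]
      exact Finset.sum_le_sum fun j _ => mul_le_mul_of_nonneg_left (hxy j) (hB i j).le
    have hpow : ∀ n : ℕ, ∀ i, t ^ n * w i ≤ ((B ^ n) *ᵥ w) i := by
      intro n
      induction n with
      | zero => intro i; simp [Matrix.one_mulVec]
      | succ n ih =>
        intro i
        have h1 : (B ^ (n+1)) *ᵥ w = B *ᵥ ((B ^ n) *ᵥ w) := by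
          rw [pow_succ', ← Matrix.mulVec_mulVec]
        rw [h1]
        have h2 : ∀ j, (t ^ n • w) j ≤ ((B ^ n) *ᵥ w) j := fun j => by
          simpa [smul_eq_mul] using ih j
        have h3 := hmono _ _ h2 i
        rw [Matrix.mulVec_smul] at h3
        have h4 : t ^ n * (t * w i) ≤ t ^ n * (B *ᵥ w) i :=
          mul_le_mul_of_nonneg_left (htw i) (pow_nonneg ht0.le n)
        calc t ^ (n+1) * w i = t ^ n * (t * w i) := by ring
          _ ≤ t ^ n * (B *ᵥ w) i := h4
          _ = (t ^ n • (B *ᵥ w)) i := by simp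
          _ ≤ (B *ᵥ ((B ^ n) *ᵥ w)) i := h3
    set w' : Fin 3 → ℂ := fun i => (w i : ℂ) with hw'
    have hmv : ∀ n : ℕ, (M ^ n) *ᵥ w' = fun i => (((B ^ n) *ᵥ w) i : ℂ) := by
      intro n
      funext i
      rw [hMpow n]
      simp only [Matrix.mulVec, dotProduct, Matrix.map_apply, hw']
      push_cast
      rfl
    have hwnorm : 0 < ‖w'‖ := by
      have h5 := norm_le_pi_norm w' 0
      have h0 : 0 < ‖w' 0‖ := by
        simp only [hw', Complex.norm_real, Real.norm_eq_abs]
        exact abs_pos.mpr (hwpos 0).ne'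
      linarith
    set c := w 0 / ‖w'‖ with hc
    have hcpos : 0 < c := div_pos (hwpos 0) hwnorm
    have hlow : ∀ n : ℕ, c * t ^ n ≤ ‖M ^ n‖ := by
      intro n
      have h2 : ‖((M ^ n) *ᵥ w') 0‖ ≤ ‖(M ^ n) *ᵥ w'‖ := norm_le_pi_norm _ 0
      have h3 : ‖((M ^ n) *ᵥ w') 0‖ = |((B ^ n) *ᵥ w) 0| := by
        rw [hmv n]
        simp
      have h4 : t ^ n * w 0 ≤ ((B ^ n) *ᵥ w) 0 := hpow n 0
      have h5 : ((B ^ n) *ᵥ w) 0 ≤ |((B ^ n) *ᵥ w) 0| := le_abs_self _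
      have h6 := Matrix.linfty_opNorm_mulVec (M ^ n) w'
      have h7 : c * t ^ n = (t ^ n * w 0) / ‖w'‖ := by rw [hc]; ring
      rw [h7, div_le_iff₀ hwnorm]
      calc t ^ n * w 0 ≤ ‖(M ^ n) *ᵥ w'‖ := by linarith
        _ ≤ ‖M ^ n‖ * ‖w'‖ := h6
    -- choose z with ρ < z < t
    set z := (ρ + t)/2 with hzdef
    have hz1 : ρ < z := by rw [hzdef]; linarith
    have hz2 : z < t := by rw [hzdef]; linarith
    have hz0 : 0 < z := hρpos.trans hz1
    have hy : (1:ℝ≥0∞) < ENNReal.ofReal (t/z) := by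
      rw [show (1:ℝ≥0∞) = ENNReal.ofReal 1 from ENNReal.ofReal_one.symm,
        ENNReal.ofReal_lt_ofReal_iff (by positivity)]
      rw [lt_div_iff₀ hz0]
      linarith
    have hctop : ((ENNReal.ofReal c)⁻¹) ≠ ⊤ :=
      ENNReal.inv_ne_top.mpr (ENNReal.ofReal_pos.mpr hcpos).ne'
    have hev := ENNReal.eventually_pow_one_div_le hctop hy
    have hfin : ∀ᶠ n : ℕ in atTop, ENNReal.ofReal z ≤ (‖M ^ n‖₊ : ℝ≥0∞) ^ (1/(n:ℝ)) := by
      filter_upwards [hev, eventually_ge_atTop 1] with n hn hn1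
      have hn0 : (n:ℝ) ≠ 0 := by
        have : (1:ℝ) ≤ (n:ℝ) := by exact_mod_cast hn1
        linarith
      have h7 : ENNReal.ofReal (z/t) ≤ (ENNReal.ofReal c) ^ (1/(n:ℝ)) := by
        have e1 : ENNReal.ofReal (z/t) = (ENNReal.ofReal (t/z))⁻¹ := by
          rw [← ENNReal.ofReal_inv_of_pos (by positivity : (0:ℝ) < t/z)]
          congr 1
          field_simp
        rw [e1]
        calc (ENNReal.ofReal (t/z))⁻¹ ≤ (((ENNReal.ofReal c)⁻¹) ^ (1/(n:ℝ)))⁻¹ :=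
              ENNReal.inv_le_inv.mpr hn
          _ = (ENNReal.ofReal c) ^ (1/(n:ℝ)) := by rw [ENNReal.inv_rpow, inv_inv]
      have h8 : ENNReal.ofReal (c * t ^ n) ≤ (‖M ^ n‖₊ : ℝ≥0∞) := by
        rw [← ENNReal.ofReal_coe_nnreal, coe_nnnorm]
        exact ENNReal.ofReal_le_ofReal (hlow n)
      have h9 : (ENNReal.ofReal (c * t ^ n)) ^ (1/(n:ℝ)) =
          (ENNReal.ofReal c) ^ (1/(n:ℝ)) * ENNReal.ofReal t := by
        rw [ENNReal.ofReal_mul hcpos.le,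
          ENNReal.mul_rpow_of_ne_top ENNReal.ofReal_ne_top ENNReal.ofReal_ne_top]
        congr 1
        rw [ENNReal.ofReal_pow ht0.le, ← ENNReal.rpow_natCast (ENNReal.ofReal t) n,
          ← ENNReal.rpow_mul, mul_one_div, div_self hn0, ENNReal.rpow_one]
      calc ENNReal.ofReal z = ENNReal.ofReal (z/t * t) := by
            rw [div_mul_cancel₀ _ ht0.ne']
        _ = ENNReal.ofReal (z/t) * ENNReal.ofReal t := ENNReal.ofReal_mul (by positivity)
        _ ≤ (ENNReal.ofReal c) ^ (1/(n:ℝ)) * ENNReal.ofReal t := by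
            exact mul_le_mul_left h7 _
        _ = (ENNReal.ofReal (c * t ^ n)) ^ (1/(n:ℝ)) := h9.symm
        _ ≤ (‖M ^ n‖₊ : ℝ≥0∞) ^ (1/(n:ℝ)) := ENNReal.rpow_le_rpow h8 (by positivity)
    have hL := ge_of_tendsto (spectrum.pow_nnnorm_pow_one_div_tendsto_nhds_spectralRadius M) hfin
    rw [← hμ₀rad] at hL
    have hLL : ENNReal.ofReal z ≤ ENNReal.ofReal ρ := by
      calc ENNReal.ofReal z ≤ (‖μ₀‖₊ : ℝ≥0∞) := hL
        _ = ENNReal.ofReal ρ := by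
          rw [← ENNReal.ofReal_coe_nnreal, coe_nnnorm]
    have : z ≤ ρ := by
      rwa [ENNReal.ofReal_le_ofReal_iff hρpos.le] at hLL
    linarith
  have hdetB : Matrix.det (B - ρ • 1) = 0 := by
    apply (Matrix.exists_mulVec_eq_zero_iff).mp
    refine ⟨u, fun h => ?_, ?_⟩
    · rw [h] at hj₀; simp at hj₀
    · rw [Matrix.sub_mulVec, Matrix.smul_mulVec, Matrix.one_mulVec, heq, sub_self]
  exact ⟨ρ, hρpos, hdetB, hmax⟩
lemma charpoly_eval3 (M : Matrix (Fin 3) (Fin 3) ℂ) (r : ℂ) :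
    (Matrix.charpoly M).eval r = Matrix.det (r • 1 - M) := by
  rw [Matrix.charpoly, eval_det, matPolyEquiv_charmatrix]
  rw [Polynomial.eval_sub, Polynomial.eval_X, Polynomial.eval_C]
  congr 2
  ext i j
  simp [Matrix.scalar_apply, Matrix.smul_apply, Matrix.one_apply, Matrix.diagonal_apply]

lemma prod_lower (s : Multiset ℂ) (lam : ℝ) (h0 : 0 ≤ lam)
    (h : ∀ r ∈ s, lam ≤ ‖r‖) :
    lam ^ (Multiset.card s) ≤ ‖s.prod‖ := by
  induction s using Multiset.induction with
  | empty => simp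
  | cons a s ih =>
    simp only [Multiset.prod_cons, Multiset.card_cons, norm_mul, pow_succ']
    exact mul_le_mul (h a (Multiset.mem_cons_self a s))
      (ih fun r hr => h r (Multiset.mem_cons_of_mem hr)) (pow_nonneg h0 _)
      (norm_nonneg _)

theorem stmt_13 (A : Matrix (Fin 3) (Fin 3) ℝ) (hA : IsUnit A)
    (hinv : ∀ i j, 0 < A⁻¹ i j) (hdet0 : 0 < A.det) (hdet1 : A.det < 1) :
    ∃ lam : ℝ, 0 < lam ∧ lam < 1 ∧
      Matrix.det (A - lam • (1 : Matrix (Fin 3) (Fin 3) ℝ)) = 0 ∧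
      ∀ μ : ℂ, Matrix.det (A.map (Complex.ofReal) -
          μ • (1 : Matrix (Fin 3) (Fin 3) ℂ)) = 0 → lam ≤ ‖μ‖ := by
  have hdetU : IsUnit A.det := isUnit_iff_ne_zero.mpr hdet0.ne'
  have hBA : A⁻¹ * A = 1 := Matrix.nonsing_inv_mul A hdetU
  have hAB : A * A⁻¹ = 1 := Matrix.mul_nonsing_inv A hdetU
  have hdetB : (A⁻¹).det ≠ 0 := by
    have h1 : A⁻¹.det * A.det = 1 := by rw [← Matrix.det_mul, hBA, Matrix.det_one]
    intro h
    rw [h, zero_mul] at h1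
    exact zero_ne_one h1
  obtain ⟨ρ, hρ, hdB, hmax⟩ := perron3 A⁻¹ hinv hdetB
  have hρinv : 0 < ρ⁻¹ := inv_pos.mpr hρ
  -- the determinant condition
  have hdetA' : Matrix.det (A - ρ⁻¹ • (1 : Matrix (Fin 3) (Fin 3) ℝ)) = 0 := by
    have hid : A - ρ⁻¹ • (1 : Matrix (Fin 3) (Fin 3) ℝ) = (-ρ⁻¹) • (A * (A⁻¹ - ρ • 1)) := by
      rw [Matrix.mul_sub, hAB, Matrix.mul_smul, mul_one, smul_sub, smul_smul]
      have h2 : -ρ⁻¹ * ρ = -1 := by field_simp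
      rw [h2, neg_smul, neg_smul, one_smul, sub_neg_eq_add]
      abel
    rw [hid, Matrix.det_smul, Matrix.det_mul, hdB, mul_zero, mul_zero]
  -- minimality
  have hdetAC : (A.map Complex.ofReal).det ≠ 0 := by
    have h3 : (A.map Complex.ofReal).det = (A.det : ℂ) := by
      rw [show A.map Complex.ofReal = Complex.ofRealHom.mapMatrix A from rfl, ← RingHom.map_det]
      rfl
    rw [h3]
    exact_mod_cast hdet0.ne'
  have hmin : ∀ μ : ℂ, Matrix.det (A.map Complex.ofReal -
      μ • (1 : Matrix (Fin 3) (Fin 3) ℂ)) = 0 → ρ⁻¹ ≤ ‖μ‖ := by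
    intro μ hμ
    have hμ0 : μ ≠ 0 := by
      rintro rfl
      rw [zero_smul, sub_zero] at hμ
      exact hdetAC hμ
    have hBAc : (A⁻¹.map Complex.ofReal) * (A.map Complex.ofReal) = 1 := by
      rw [show A⁻¹.map Complex.ofReal = Complex.ofRealHom.mapMatrix A⁻¹ from rfl,
        show A.map Complex.ofReal = Complex.ofRealHom.mapMatrix A from rfl,
        ← _root_.map_mul, hBA, _root_.map_one]
    have hid2 : (A⁻¹.map Complex.ofReal) - μ⁻¹ • 1 =
        (-μ⁻¹) • ((A⁻¹.map Complex.ofReal) * (A.map Complex.ofReal - μ • 1)) := by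
      rw [Matrix.mul_sub, hBAc, Matrix.mul_smul, mul_one, smul_sub, smul_smul]
      have h4 : -μ⁻¹ * μ = -1 := by field_simp
      rw [h4, neg_smul, neg_smul, one_smul, sub_neg_eq_add]
      abel
    have h0 : ((A⁻¹.map Complex.ofReal) - μ⁻¹ • 1).det = 0 := by
      rw [hid2, Matrix.det_smul, Matrix.det_mul, hμ, mul_zero, mul_zero]
    have h5 := hmax μ⁻¹ h0
    rw [norm_inv] at h5
    have habs : 0 < ‖μ‖ := norm_pos_iff.mpr hμ0
    rw [inv_le_comm₀ hρ habs]
    exact h5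
  -- lam < 1
  have hlt1 : ρ⁻¹ < 1 := by
    set C := A.map Complex.ofReal with hC
    set rs := C.charpoly.roots with hrs
    have hcard : Multiset.card rs = 3 := by
      have hsp : C.charpoly.Splits := IsAlgClosed.splits _
      rw [hrs, (Polynomial.splits_iff_card_roots).mp hsp, Matrix.charpoly_natDegree_eq_dim]
      simp
    have hprod : C.det = rs.prod := Matrix.det_eq_prod_roots_charpoly C
    have hroot : ∀ r ∈ rs, ρ⁻¹ ≤ ‖r‖ := by
      intro r hr
      apply hmin
      have h6 : C.charpoly.eval r = 0 :=
        (Polynomial.mem_roots (C.charpoly_monic.ne_zero)).mp hr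
      rw [charpoly_eval3] at h6
      have hneg : C - r • 1 = -(r • 1 - C) := (neg_sub _ _).symm
      rw [hneg, Matrix.det_neg, h6, mul_zero]
    have h3 : (ρ⁻¹)^3 ≤ ‖C.det‖ := by
      rw [hprod]
      have h7 := prod_lower rs ρ⁻¹ hρinv.le hroot
      rwa [hcard] at h7
    have habsC : ‖C.det‖ = A.det := by
      have h8 : C.det = (A.det : ℂ) := by
        rw [show C = Complex.ofRealHom.mapMatrix A from rfl, ← RingHom.map_det]
        rfl
      rw [h8, Complex.norm_real, Real.norm_eq_abs, abs_of_pos hdet0]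
    rw [habsC] at h3
    by_contra hc
    push_neg at hc
    have h9 : (1:ℝ) ≤ (ρ⁻¹)^3 := one_le_pow₀ hc
    linarith
  exact ⟨ρ⁻¹, hρinv, hlt1, hdetA', hmin⟩
end

section
/- Let b, a, μ > 0, ω > 0, φ ∈ (0, 1), and set c = e^{−μ(1−φ)ω}, K = c·e^{bφω} and r = bφω − μ(1−φ)ω. Define the 1-dimensional Poincaré map P(x) = b·c·x·e^{bφω} / (b + a·c·x·(e^{bφω} − 1)) for x ≥ 0. Then P has a fixed point in (0, ∞) if and only if r > 0, and in that case the fixed point is unique and equals q = b(K − 1)/(a·c·(e^{bφω} − 1)). -/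
theorem stmt_16 (b a μ ω φ : ℝ) (hb : 0 < b) (ha : 0 < a) (hμ : 0 < μ)
    (hω : 0 < ω) (hφ0 : 0 < φ) (hφ1 : φ < 1) :
    let c : ℝ := Real.exp (-μ * (1 - φ) * ω)
    let K : ℝ := c * Real.exp (b * φ * ω)
    let r : ℝ := b * φ * ω - μ * (1 - φ) * ω
    let P : ℝ → ℝ := fun x =>
      b * c * x * Real.exp (b * φ * ω) /
        (b + a * c * x * (Real.exp (b * φ * ω) - 1))
    ((∃ q > (0 : ℝ), P q = q) ↔ 0 < r) ∧
    (0 < r →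
      let q : ℝ := b * (K - 1) / (a * c * (Real.exp (b * φ * ω) - 1))
      0 < q ∧ P q = q ∧ ∀ x > (0 : ℝ), P x = x → x = q) := by
  intro c K r P
  have hc : 0 < c := Real.exp_pos _
  have hE1 : 1 < Real.exp (b * φ * ω) := by
    rw [Real.one_lt_exp_iff]; positivity
  set E : ℝ := Real.exp (b * φ * ω) with hEdef
  have hKr : K = Real.exp r := by
    show c * E = Real.exp r
    rw [hEdef, ← Real.exp_add]
    congr 1; ring
  have hKr1 : (1 < K ↔ 0 < r) := by
    rw [hKr, Real.one_lt_exp_iff]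
  have hden : 0 < a * c * (E - 1) := by
    have : 0 < E - 1 := by linarith
    positivity
  set q₀ : ℝ := b * (K - 1) / (a * c * (E - 1)) with hq₀
  have hq0pos : 0 < r → 0 < q₀ := by
    intro hr
    have hK1 : 1 < K := hKr1.mpr hr
    rw [hq₀]
    have hK1' : 0 < K - 1 := by linarith
    have : 0 < b * (K - 1) := by positivity
    exact div_pos this hden
  have hfix : ∀ x : ℝ, 0 < x → (P x = x ↔ x = q₀) := by
    intro x hx
    have hD : 0 < b + a * c * x * (E - 1) := by
      have : 0 < E - 1 := by linarith
      positivity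
    show b * c * x * E / (b + a * c * x * (E - 1)) = x ↔ x = q₀
    rw [div_eq_iff hD.ne']
    constructor
    · intro h
      rw [hq₀]
      have hKE : K = c * E := rfl
      have hEne : E - 1 ≠ 0 := by linarith
      field_simp
      rw [hKE]
      nlinarith [hx]
    · intro h
      subst h
      rw [hq₀]
      have hKE : K = c * E := rfl
      have hEne : E - 1 ≠ 0 := by linarith
      field_simp
      rw [hKE]
      ring
  constructor
  · constructor
    · rintro ⟨x, hx, hPx⟩
      have := (hfix x hx).mp hPx
      subst this
      -- x = q₀ > 0 ⇒ K > 1 ⇒ r > 0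
      rw [← hKr1]
      by_contra hK
      push_neg at hK
      have : q₀ ≤ 0 := by
        rw [hq₀]
        apply div_nonpos_of_nonpos_of_nonneg
        · nlinarith
        · exact hden.le
      linarith
    · intro hr
      exact ⟨q₀, hq0pos hr, (hfix q₀ (hq0pos hr)).mpr rfl⟩
  · intro hr
    refine ⟨hq0pos hr, (hfix q₀ (hq0pos hr)).mpr rfl, fun x hx hPx => (hfix x hx).mp hPx⟩
end
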